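/- arXiv:2411.13300 — 2 statements merged into one kernel-verified Lean document; each statement's English description precedes it below -/
import Mathlib

section
/- Let P ∈ ℝ[x₁,…,x_{n−1};x_n] be a nonzero polynomial of degree d_n in x_n and A ∈ GL(2,ℝ). Then for all x ∈ ℝ^{n−1} and (x_n,y) ∈ ℝ²∖{(0,0)}, the order of H^{d_n}(A^{*d_n}P) at (x,(x_n,y)) equals the order of H^{d_n}(P) at (x, A(x_n,y)ᵀ). -/
noncomputable section

open Polynomial Finset

/-- The real projective line `ℝP¹`: the quotient of `ℝ² ∖ {0}` by proportionality. -/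
abbrev RP1 : Type := Projectivization ℝ (Fin 2 → ℝ)

/-- The quotient topology on the real projective line. -/
instance : TopologicalSpace RP1 :=
  inferInstanceAs (TopologicalSpace (Quotient (projectivizationSetoid ℝ (Fin 2 → ℝ))))

/-- Homogenization of a univariate real polynomial with respect to the degree `d`,
as a binary form (an element of `ℝ[x,y]`, homogeneous of degree `d` when `P.natDegree ≤ d`):
`H^d(P)(x,y) = ∑_{k=0}^d c_k x^k y^(d-k)`. -/
def homog (d : ℕ) (P : Polynomial ℝ) : MvPolynomial (Fin 2) ℝ :=
  ∑ k ∈ Finset.range (d + 1),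
    MvPolynomial.C (P.coeff k) * MvPolynomial.X 0 ^ k * MvPolynomial.X 1 ^ (d - k)

/-- The pull-back `ι_M^{*}` of a binary form `g` along the parametrized line
`ι_M : x ↦ M (x,1)ᵀ`, i.e. the univariate polynomial `g(m₁₁ x + m₁₂, m₂₁ x + m₂₂)`.
For `M = 1` this is the standard pull-back `ι^{*d} g = g(x, 1)`. -/
def pullM (M : Matrix (Fin 2) (Fin 2) ℝ) (g : MvPolynomial (Fin 2) ℝ) : Polynomial ℝ :=
  MvPolynomial.eval₂ Polynomial.C
    ![Polynomial.C (M 0 0) * Polynomial.X + Polynomial.C (M 0 1),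
      Polynomial.C (M 1 0) * Polynomial.X + Polynomial.C (M 1 1)] g

/-- Right composition `R_M g = g ∘ M` of a binary form with a linear map of `ℝ²`. -/
def compM (M : Matrix (Fin 2) (Fin 2) ℝ) (g : MvPolynomial (Fin 2) ℝ) : MvPolynomial (Fin 2) ℝ :=
  MvPolynomial.eval₂ MvPolynomial.C
    (fun i => ∑ j, MvPolynomial.C (M i j) * MvPolynomial.X j) g

/-- The operator `A^{*d} P = ι_A^{*d} (H^d P)`, i.e.
`A^{*d}P(x) = ∑_{k=0}^d c_k (a₁₁x+a₁₂)^k (a₂₁x+a₂₂)^{d-k}` for `P = ∑ c_k x^k`. -/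
def AstarU (d : ℕ) (M : Matrix (Fin 2) (Fin 2) ℝ) (P : Polynomial ℝ) : Polynomial ℝ :=
  pullM M (homog d P)

/-- The Sylvester matrix of `P` and `Q` with respect to the fixed degrees `p` and `q`
(padding with zero coefficients as if `deg P = p` and `deg Q = q`). -/
def sylvester {R : Type*} [CommRing R] (p q : ℕ) (P Q : Polynomial R) :
    Matrix (Fin (p + q)) (Fin (p + q)) R := fun i j =>
  if (i : ℕ) < q then
    (if (i : ℕ) ≤ (j : ℕ) ∧ (j : ℕ) ≤ (i : ℕ) + p then P.coeff (p + (i : ℕ) - (j : ℕ)) else 0)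
  else
    (if (i : ℕ) - q ≤ (j : ℕ) ∧ (j : ℕ) ≤ (i : ℕ) then Q.coeff (q + ((i : ℕ) - q) - (j : ℕ)) else 0)

/-- The resultant `Res^{p,q}(P,Q)` with respect to the fixed degrees `p` and `q`:
the determinant of the corresponding Sylvester matrix. -/
def resFixed {R : Type*} [CommRing R] (p q : ℕ) (P Q : Polynomial R) : R :=
  (sylvester p q P Q).det

/-- The discriminant `Disc^p(P)` of `P` with respect to the fixed degree `p`: the resultant
(with respect to degrees `(p-1, p-1)`) of the pull-backs of the two partial derivatives
`F_x`, `F_y` of the binary form `F = H^p(P)`; these pull-backs are `P'` and `p·P − x·P'`. -/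
def discFixed {R : Type*} [CommRing R] (p : ℕ) (P : Polynomial R) : R :=
  (-1) ^ (p * (p - 1) / 2) *
    resFixed (p - 1) (p - 1) (Polynomial.derivative P)
      (Polynomial.C (p : R) * P - Polynomial.X * Polynomial.derivative P)

/-- Evaluation `E_x` of a polynomial in `x₁,…,x_m;x_n` at `x ∈ ℝ^m` in its first `m`
variables, giving a univariate real polynomial in `x_n`. -/
def evalP {m : ℕ} (P : Polynomial (MvPolynomial (Fin m) ℝ)) (x : Fin m → ℝ) : Polynomial ℝ :=
  P.map (MvPolynomial.eval x : MvPolynomial (Fin m) ℝ →+* ℝ)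

/-- The operator `A^{*d}` acting on the last variable of a polynomial in `x₁,…,x_m;x_n`:
`A^{*d}P(x,x_n) = ∑_{k=0}^d c_k(x) (a₁₁x_n+a₁₂)^k (a₂₁x_n+a₂₂)^{d-k}`. -/
def AstarPoly {m : ℕ} (d : ℕ) (M : Matrix (Fin 2) (Fin 2) ℝ)
    (P : Polynomial (MvPolynomial (Fin m) ℝ)) : Polynomial (MvPolynomial (Fin m) ℝ) :=
  ∑ k ∈ Finset.range (d + 1),
    Polynomial.C (P.coeff k) *
      (Polynomial.C (MvPolynomial.C (M 0 0)) * Polynomial.X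
        + Polynomial.C (MvPolynomial.C (M 0 1))) ^ k *
      (Polynomial.C (MvPolynomial.C (M 1 0)) * Polynomial.X
        + Polynomial.C (MvPolynomial.C (M 1 1))) ^ (d - k)

/-- The order of a (polynomial) function at a point: the smallest `k` such that some
partial derivative of total order `k` does not vanish at the point, i.e. the smallest `k`
with `iteratedFDeriv ℝ k f v ≠ 0`; it is `⊤` if all derivatives vanish. -/
def ordAt {E : Type*} [NormedAddCommGroup E] [NormedSpace ℝ E] (f : E → ℝ) (v : E) : ℕ∞ :=
  sInf {k : ℕ∞ | ∃ n : ℕ, k = n ∧ iteratedFDeriv ℝ n f v ≠ 0}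

/-- A function is order-invariant on a set if it has the same order at every point of the set. -/
def OrderInvariantOn {E : Type*} [NormedAddCommGroup E] [NormedSpace ℝ E]
    (f : E → ℝ) (S : Set E) : Prop :=
  ∀ x ∈ S, ∀ y ∈ S, ordAt f x = ordAt f y

/-- `(v 0 : v 1)` is a projective root of the binary form `g` of multiplicity (exactly) `mult`:
in the factorization of `g`, the linear form vanishing on the line through `v` occurs with
exponent `mult`. -/
def HasProjRootOfMult (g : MvPolynomial (Fin 2) ℝ) (v : Fin 2 → ℝ) (mult : ℕ) : Prop :=
  ∃ h : MvPolynomial (Fin 2) ℝ,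
    g = (MvPolynomial.C (v 1) * MvPolynomial.X 0 - MvPolynomial.C (v 0) * MvPolynomial.X 1) ^ mult * h
      ∧ MvPolynomial.eval v h ≠ 0

/-- The projective zero set `Z_{ℝP¹}(P,S)` of `P` over `S`, with respect to the degree `d`
in the last variable: the set of `(x, (x_n : y))` with `x ∈ S` and `H^d(P)(x,(x_n,y)) = 0`. -/
def ZProj {m : ℕ} (d : ℕ) (P : Polynomial (MvPolynomial (Fin m) ℝ)) (S : Set (Fin m → ℝ)) :
    Set ((Fin m → ℝ) × RP1) :=
  {p | p.1 ∈ S ∧ ∃ (v : Fin 2 → ℝ) (hv : v ≠ 0),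
    Projectivization.mk ℝ v hv = p.2 ∧ MvPolynomial.eval v (homog d (evalP P p.1)) = 0}

/-- `θ` is a (finite) system of real root functions for `P` on `S`: continuous functions with
pairwise disjoint graphs whose union is `Z_ℝ(P,S)`, each of constant positive multiplicity. -/
def IsRealRootFunctions {m : ℕ} (P : Polynomial (MvPolynomial (Fin m) ℝ)) (S : Set (Fin m → ℝ))
    {k : ℕ} (θ : Fin k → (Fin m → ℝ) → ℝ) : Prop :=
  (∀ l, ContinuousOn (θ l) S) ∧
  (∀ x ∈ S, ∀ l l' : Fin k, l ≠ l' → θ l x ≠ θ l' x) ∧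
  (∀ x ∈ S, ∀ t : ℝ, (evalP P x).eval t = 0 ↔ ∃ l, θ l x = t) ∧
  (∀ l : Fin k, ∃ mult : ℕ, 0 < mult ∧ ∀ x ∈ S, (evalP P x).rootMultiplicity (θ l x) = mult)

/-- `P` is delineable on `S`. -/
def Delineable {m : ℕ} (P : Polynomial (MvPolynomial (Fin m) ℝ)) (S : Set (Fin m → ℝ)) : Prop :=
  ∃ (k : ℕ) (θ : Fin k → (Fin m → ℝ) → ℝ), IsRealRootFunctions P S θ

/-- `θ` is a (finite) system of projective root functions for `P` on `S` with respect to the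
degree `d` in the last variable: continuous functions into `ℝP¹` with pairwise disjoint graphs
whose union is `Z_{ℝP¹}(P,S)`, each of constant positive multiplicity. -/
def IsProjRootFunctions {m : ℕ} (d : ℕ) (P : Polynomial (MvPolynomial (Fin m) ℝ))
    (S : Set (Fin m → ℝ)) {k : ℕ} (θ : Fin k → (Fin m → ℝ) → RP1) : Prop :=
  (∀ l, ContinuousOn (θ l) S) ∧
  (∀ x ∈ S, ∀ l l' : Fin k, l ≠ l' → θ l x ≠ θ l' x) ∧
  (∀ x ∈ S, ∀ (v : Fin 2 → ℝ) (hv : v ≠ 0),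
    (MvPolynomial.eval v (homog d (evalP P x)) = 0 ↔ ∃ l, θ l x = Projectivization.mk ℝ v hv)) ∧
  (∀ l : Fin k, ∃ mult : ℕ, 0 < mult ∧ ∀ x ∈ S, ∀ (v : Fin 2 → ℝ) (hv : v ≠ 0),
    θ l x = Projectivization.mk ℝ v hv → HasProjRootOfMult (homog d (evalP P x)) v mult)

/-- `P` is projectively delineable on `S` (with respect to the degree `d` in the last variable). -/
def ProjDelineable {m : ℕ} (d : ℕ) (P : Polynomial (MvPolynomial (Fin m) ℝ))
    (S : Set (Fin m → ℝ)) : Prop :=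
  ∃ (k : ℕ) (θ : Fin k → (Fin m → ℝ) → RP1), IsProjRootFunctions d P S θ

/-- `S` is an analytic submanifold of `ℝ^m`: around each of its points, in suitable
real-analytic coordinates, `S` is an open piece of a linear subspace. -/
def IsAnalyticSubmanifold {m : ℕ} (S : Set (Fin m → ℝ)) : Prop :=
  ∀ s ∈ S, ∃ (U V : Set (Fin m → ℝ)) (φ ψ : (Fin m → ℝ) → (Fin m → ℝ))
      (L : Submodule ℝ (Fin m → ℝ)),
    IsOpen U ∧ IsOpen V ∧ s ∈ U ∧
    AnalyticOnNhd ℝ φ U ∧ AnalyticOnNhd ℝ ψ V ∧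
    Set.MapsTo φ U V ∧ Set.MapsTo ψ V U ∧
    Set.EqOn (ψ ∘ φ) id U ∧ Set.EqOn (φ ∘ ψ) id V ∧
    φ '' (U ∩ S) = V ∩ (L : Set (Fin m → ℝ))

end


section Helpers

variable {E F : Type*} [NormedAddCommGroup E] [NormedSpace ℝ E]
  [NormedAddCommGroup F] [NormedSpace ℝ F]

lemma compCLM_eq_zero_iff {n : ℕ} (M : ContinuousMultilinearMap ℝ (fun _ : Fin n => F) ℝ)
    (e : E ≃L[ℝ] F) :
    M.compContinuousLinearMap (fun _ => (e : E →L[ℝ] F)) = 0 ↔ M = 0 := by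
  constructor
  · intro h
    ext mv
    have h2 := ContinuousMultilinearMap.ext_iff.1 h (fun i => e.symm (mv i))
    simpa using h2
  · rintro rfl
    ext mv
    simp

lemma iteratedFDeriv_comp_CLE (e : E ≃L[ℝ] F) (f : F → ℝ) (x : E) (n : ℕ) :
    iteratedFDeriv ℝ n (f ∘ e) x
      = (iteratedFDeriv ℝ n f (e x)).compContinuousLinearMap (fun _ => (e : E →L[ℝ] F)) := by
  have h := e.iteratedFDerivWithin_comp_right f uniqueDiffOn_univ (Set.mem_univ (e x)) n
  simpa [iteratedFDerivWithin_univ] using h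

lemma ordAt_comp_CLE (e : E ≃L[ℝ] F) (f : F → ℝ) (x : E) :
    ordAt (f ∘ e) x = ordAt f (e x) := by
  unfold ordAt
  congr 1
  ext k
  refine exists_congr fun n => and_congr_right fun _ => not_congr ?_
  rw [iteratedFDeriv_comp_CLE]
  exact compCLM_eq_zero_iff _ e

end Helpers
section Alg

open Polynomial Finset

lemma eval_homog (d : ℕ) (Q : Polynomial ℝ) (v : Fin 2 → ℝ) :
    MvPolynomial.eval v (homog d Q)
      = ∑ k ∈ Finset.range (d + 1), Q.coeff k * v 0 ^ k * v 1 ^ (d - k) := by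
  simp [homog]

lemma sum_coeff_homog_eq (d : ℕ) (Q : Polynomial ℝ) (hQ : Q.natDegree ≤ d) (a b : ℝ)
    (hb : b ≠ 0) :
    ∑ j ∈ Finset.range (d + 1), Q.coeff j * a ^ j * b ^ (d - j) = b ^ d * Q.eval (a / b) := by
  rw [Polynomial.eval_eq_sum_range' (Nat.lt_succ_of_le hQ), Finset.mul_sum]
  refine Finset.sum_congr rfl fun j hj => ?_
  have hj' : j ≤ d := Nat.lt_succ_iff.mp (Finset.mem_range.mp hj)
  rw [div_pow, show (b:ℝ) ^ d = b ^ (d - j) * b ^ j from (pow_sub_mul_pow b hj').symm]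
  field_simp

lemma evalP_AstarPoly {m : ℕ} (d : ℕ) (M : Matrix (Fin 2) (Fin 2) ℝ)
    (P : Polynomial (MvPolynomial (Fin m) ℝ)) (x : Fin m → ℝ) :
    evalP (AstarPoly d M P) x
      = ∑ k ∈ Finset.range (d + 1),
          Polynomial.C (MvPolynomial.eval x (P.coeff k)) *
            (Polynomial.C (M 0 0) * Polynomial.X + Polynomial.C (M 0 1)) ^ k *
            (Polynomial.C (M 1 0) * Polynomial.X + Polynomial.C (M 1 1)) ^ (d - k) := by
  simp [evalP, AstarPoly, Polynomial.map_sum, Polynomial.map_mul, Polynomial.map_pow,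
    Polynomial.map_add, Polynomial.map_C, Polynomial.map_X]

lemma natDegree_sum_linpow (d : ℕ) (c : ℕ → ℝ) (a b a' b' : ℝ) :
    (∑ k ∈ Finset.range (d + 1),
        Polynomial.C (c k) * (Polynomial.C a * Polynomial.X + Polynomial.C b) ^ k *
          (Polynomial.C a' * Polynomial.X + Polynomial.C b') ^ (d - k)).natDegree ≤ d := by
  refine Polynomial.natDegree_sum_le_of_forall_le _ _ fun k hk => ?_
  have hk' : k ≤ d := Nat.lt_succ_iff.mp (Finset.mem_range.mp hk)
  have h1 : ((Polynomial.C a * Polynomial.X + Polynomial.C b) ^ k).natDegree ≤ k := by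
    refine le_trans Polynomial.natDegree_pow_le ?_
    have := Polynomial.natDegree_linear_le (a := a) (b := b)
    calc k * (Polynomial.C a * Polynomial.X + Polynomial.C b).natDegree ≤ k * 1 :=
          Nat.mul_le_mul_left k this
      _ = k := mul_one k
  have h2 : ((Polynomial.C a' * Polynomial.X + Polynomial.C b') ^ (d - k)).natDegree ≤ d - k := by
    refine le_trans Polynomial.natDegree_pow_le ?_
    have := Polynomial.natDegree_linear_le (a := a') (b := b')
    calc (d - k) * (Polynomial.C a' * Polynomial.X + Polynomial.C b').natDegree ≤ (d - k) * 1 :=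
          Nat.mul_le_mul_left (d - k) this
      _ = d - k := mul_one _
  calc (Polynomial.C (c k) * (Polynomial.C a * Polynomial.X + Polynomial.C b) ^ k *
          (Polynomial.C a' * Polynomial.X + Polynomial.C b') ^ (d - k)).natDegree
      ≤ (Polynomial.C (c k) * (Polynomial.C a * Polynomial.X + Polynomial.C b) ^ k).natDegree
        + ((Polynomial.C a' * Polynomial.X + Polynomial.C b') ^ (d - k)).natDegree :=
        Polynomial.natDegree_mul_le
    _ ≤ ((Polynomial.C (c k)).natDegree
        + ((Polynomial.C a * Polynomial.X + Polynomial.C b) ^ k).natDegree) + (d - k) :=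
        add_le_add Polynomial.natDegree_mul_le h2
    _ ≤ (0 + k) + (d - k) := by
        exact add_le_add (add_le_add (le_of_eq (Polynomial.natDegree_C _)) h1) le_rfl
    _ = d := by omega

lemma key_point {m : ℕ} (dn : ℕ) (A : Matrix (Fin 2) (Fin 2) ℝ)
    (P : Polynomial (MvPolynomial (Fin m) ℝ)) (x : Fin m → ℝ) (v : Fin 2 → ℝ) (hv : v 1 ≠ 0) :
    MvPolynomial.eval v (homog dn (evalP (AstarPoly dn A P) x))
      = MvPolynomial.eval (A.mulVec v) (homog dn (evalP P x)) := by
  rw [eval_homog, eval_homog, evalP_AstarPoly]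
  rw [sum_coeff_homog_eq dn _ (natDegree_sum_linpow dn _ _ _ _ _) (v 0) (v 1) hv]
  rw [Polynomial.eval_finset_sum, Finset.mul_sum]
  refine Finset.sum_congr rfl fun k hk => ?_
  have hk' : k ≤ dn := Nat.lt_succ_iff.mp (Finset.mem_range.mp hk)
  have hw0 : A.mulVec v 0 = A 0 0 * v 0 + A 0 1 * v 1 := by
    simp [Matrix.mulVec, dotProduct, Fin.sum_univ_two]
  have hw1 : A.mulVec v 1 = A 1 0 * v 0 + A 1 1 * v 1 := by
    simp [Matrix.mulVec, dotProduct, Fin.sum_univ_two]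
  have hcoeff : (evalP P x).coeff k = MvPolynomial.eval x (P.coeff k) := by
    simp [evalP, Polynomial.coeff_map]
  rw [hw0, hw1, hcoeff]
  have e1 : v 1 * (A 0 0 * (v 0 / v 1) + A 0 1) = A 0 0 * v 0 + A 0 1 * v 1 := by
    field_simp
  have e2 : v 1 * (A 1 0 * (v 0 / v 1) + A 1 1) = A 1 0 * v 0 + A 1 1 * v 1 := by
    field_simp
  simp only [Polynomial.eval_mul, Polynomial.eval_pow, Polynomial.eval_add, Polynomial.eval_C,
    Polynomial.eval_X]
  calc v 1 ^ dn * (MvPolynomial.eval x (P.coeff k) * (A 0 0 * (v 0 / v 1) + A 0 1) ^ k *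
          (A 1 0 * (v 0 / v 1) + A 1 1) ^ (dn - k))
      = MvPolynomial.eval x (P.coeff k) *
          (v 1 ^ k * (A 0 0 * (v 0 / v 1) + A 0 1) ^ k) *
          (v 1 ^ (dn - k) * (A 1 0 * (v 0 / v 1) + A 1 1) ^ (dn - k)) := by
        rw [show v 1 ^ dn = v 1 ^ k * v 1 ^ (dn - k) from (pow_mul_pow_sub _ hk').symm]; ring
    _ = MvPolynomial.eval x (P.coeff k) * (v 1 * (A 0 0 * (v 0 / v 1) + A 0 1)) ^ k *
          (v 1 * (A 1 0 * (v 0 / v 1) + A 1 1)) ^ (dn - k) := by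
        rw [mul_pow, mul_pow]
    _ = MvPolynomial.eval x (P.coeff k) * (A 0 0 * v 0 + A 0 1 * v 1) ^ k *
          (A 1 0 * v 0 + A 1 1 * v 1) ^ (dn - k) := by rw [e1, e2]

end Alg
section Main

lemma fshape {m : ℕ} (d : ℕ) (Q : Polynomial (MvPolynomial (Fin m) ℝ)) :
    (fun p : (Fin m → ℝ) × (Fin 2 → ℝ) => MvPolynomial.eval p.2 (homog d (evalP Q p.1)))
      = fun p => ∑ k ∈ Finset.range (d + 1),
          MvPolynomial.eval p.1 (Q.coeff k) * p.2 0 ^ k * p.2 1 ^ (d - k) := by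
  funext p
  rw [eval_homog]
  refine Finset.sum_congr rfl fun k _ => ?_
  simp [evalP, Polynomial.coeff_map]

lemma cont_form {m : ℕ} (d : ℕ) (c : ℕ → MvPolynomial (Fin m) ℝ) :
    Continuous (fun p : (Fin m → ℝ) × (Fin 2 → ℝ) =>
      ∑ k ∈ Finset.range (d + 1), MvPolynomial.eval p.1 (c k) * p.2 0 ^ k * p.2 1 ^ (d - k)) := by
  refine continuous_finset_sum _ fun k _ => ?_
  have h1 : Continuous fun p : (Fin m → ℝ) × (Fin 2 → ℝ) => MvPolynomial.eval p.1 (c k) :=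
    (MvPolynomial.continuous_eval (p := c k)).comp continuous_fst
  have h2 : Continuous fun p : (Fin m → ℝ) × (Fin 2 → ℝ) => p.2 0 ^ k :=
    ((continuous_apply (0 : Fin 2)).comp continuous_snd).pow k
  have h3 : Continuous fun p : (Fin m → ℝ) × (Fin 2 → ℝ) => p.2 1 ^ (d - k) :=
    ((continuous_apply (1 : Fin 2)).comp continuous_snd).pow (d - k)
  exact (h1.mul h2).mul h3

lemma cont_F {m : ℕ} (d : ℕ) (Q : Polynomial (MvPolynomial (Fin m) ℝ)) :
    Continuous (fun p : (Fin m → ℝ) × (Fin 2 → ℝ) =>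
      MvPolynomial.eval p.2 (homog d (evalP Q p.1))) := by
  rw [fshape]
  exact cont_form d _

lemma dense_snd_one {m : ℕ} :
    Dense {p : (Fin m → ℝ) × (Fin 2 → ℝ) | p.2 1 ≠ 0} := by
  intro p
  set s : ℝ := if 0 ≤ p.2 1 then 1 else -1 with hs
  have h0 : Filter.Tendsto (fun n : ℕ => s / ((n : ℝ) + 1)) Filter.atTop (nhds 0) := by
    have := tendsto_one_div_add_atTop_nhds_zero_nat.const_mul s
    simpa [div_eq_mul_inv] using this
  have h2 : Filter.Tendsto (fun n : ℕ => p.2 + (s / ((n : ℝ) + 1)) • (Pi.single (1 : Fin 2) (1 : ℝ) : Fin 2 → ℝ))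
      Filter.atTop (nhds p.2) := by
    have := h0.smul_const ((Pi.single (1 : Fin 2) (1 : ℝ) : Fin 2 → ℝ))
    simpa using tendsto_const_nhds.add this
  have hseq : Filter.Tendsto
      (fun n : ℕ => ((p.1, p.2 + (s / ((n : ℝ) + 1)) • (Pi.single (1 : Fin 2) (1 : ℝ) : Fin 2 → ℝ)) :
        (Fin m → ℝ) × (Fin 2 → ℝ))) Filter.atTop (nhds p) := by
    exact Filter.Tendsto.prodMk_nhds
      (tendsto_const_nhds : Filter.Tendsto (fun _ : ℕ => p.1) Filter.atTop (nhds p.1)) h2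
  refine mem_closure_of_tendsto hseq (Filter.Eventually.of_forall fun n => ?_)
  show (p.2 + (s / ((n : ℝ) + 1)) • (Pi.single (1 : Fin 2) (1 : ℝ) : Fin 2 → ℝ)) 1 ≠ 0
  have hpos : (0 : ℝ) < (n : ℝ) + 1 := by positivity
  by_cases h : 0 ≤ p.2 1
  · have : 0 < p.2 1 + 1 / ((n : ℝ) + 1) := by positivity
    simpa [hs, if_pos h, one_div] using this.ne'
  · have h' : p.2 1 < 0 := lt_of_not_ge h
    have hneg : (-1 : ℝ) / ((n : ℝ) + 1) < 0 := div_neg_of_neg_of_pos (by norm_num) hpos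
    have : p.2 1 + (-1 : ℝ) / ((n : ℝ) + 1) < 0 := by linarith
    simpa [hs, if_neg h] using this.ne

/-- The linear change of variables on `ℝ²` given by an invertible matrix. -/
noncomputable def eA (A : GL (Fin 2) ℝ) : (Fin 2 → ℝ) ≃L[ℝ] (Fin 2 → ℝ) :=
  LinearEquiv.toContinuousLinearEquiv <|
    LinearEquiv.ofLinear (Matrix.mulVecLin (A : Matrix (Fin 2) (Fin 2) ℝ))
      (Matrix.mulVecLin ((A⁻¹ : GL (Fin 2) ℝ) : Matrix (Fin 2) (Fin 2) ℝ))
      (by rw [← Matrix.mulVecLin_mul, Units.mul_inv, Matrix.mulVecLin_one])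
      (by rw [← Matrix.mulVecLin_mul, Units.inv_mul, Matrix.mulVecLin_one])

lemma eA_apply (A : GL (Fin 2) ℝ) (v : Fin 2 → ℝ) :
    eA A v = (A : Matrix (Fin 2) (Fin 2) ℝ).mulVec v := by
  simp [eA, LinearEquiv.coe_toContinuousLinearEquiv, Matrix.mulVecLin_apply]

end Main

/-- Let `P` be a nonzero polynomial in `x₁,…,x_m;x_n` of degree `d_n` in
`x_n` and `A ∈ GL(2,ℝ)`. Then for all `x ∈ ℝ^m` and `(x_n,y) ≠ (0,0)`, the order of
`H^{d_n}(A^{*d_n}P)` at `(x,(x_n,y))` equals the order of `H^{d_n}(P)` at `(x, A(x_n,y)ᵀ)`. -/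
theorem order_homog_AstarPoly (m dn : ℕ)
    (P : Polynomial (MvPolynomial (Fin m) ℝ)) (hP : P ≠ 0) (hdeg : P.natDegree = dn)
    (A : GL (Fin 2) ℝ) (x : Fin m → ℝ) (v : Fin 2 → ℝ) (hv : v ≠ 0) :
    ordAt (fun p : (Fin m → ℝ) × (Fin 2 → ℝ) =>
        MvPolynomial.eval p.2
          (homog dn (evalP (AstarPoly dn (A : Matrix (Fin 2) (Fin 2) ℝ) P) p.1))) (x, v)
      = ordAt (fun p : (Fin m → ℝ) × (Fin 2 → ℝ) =>
          MvPolynomial.eval p.2 (homog dn (evalP P p.1)))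
          (x, (A : Matrix (Fin 2) (Fin 2) ℝ).mulVec v) := by
  let T : ((Fin m → ℝ) × (Fin 2 → ℝ)) ≃L[ℝ] ((Fin m → ℝ) × (Fin 2 → ℝ)) :=
    (ContinuousLinearEquiv.refl ℝ (Fin m → ℝ)).prodCongr (eA A)
  have hT : ∀ p : (Fin m → ℝ) × (Fin 2 → ℝ),
      T p = (p.1, (A : Matrix (Fin 2) (Fin 2) ℝ).mulVec p.2) := by
    intro p
    simp [T, ContinuousLinearEquiv.prodCongr_apply, eA_apply]
  have hfun : (fun p : (Fin m → ℝ) × (Fin 2 → ℝ) =>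
        MvPolynomial.eval p.2
          (homog dn (evalP (AstarPoly dn (A : Matrix (Fin 2) (Fin 2) ℝ) P) p.1)))
      = (fun p : (Fin m → ℝ) × (Fin 2 → ℝ) =>
          MvPolynomial.eval p.2 (homog dn (evalP P p.1))) ∘ T := by
    refine Continuous.ext_on dense_snd_one (cont_F dn _) ((cont_F dn P).comp T.continuous) ?_
    intro p hp
    have h := key_point dn (A : Matrix (Fin 2) (Fin 2) ℝ) P p.1 p.2 hp
    simpa [Function.comp, hT p] using h
  rw [hfun, ordAt_comp_CLE, hT]
end

section
/- There exist a connected analytic submanifold S of ℝ² and a polynomial P ∈ ℝ[x₁,x₂;x₃] of degree 4 in x₃ such that: (1) P never nullifies on S; (2) the discriminant Disc^4_{x₃}(P) is not the zero polynomial of ℝ[x₁,x₂] and is order-invariant on S; and (3) P is not projectively delineable over S. -/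
/-! ### Auxiliary material for the proof -/

noncomputable section AuxProof

open Polynomial Finset

/-- The counterexample polynomial `P(x₁,x₂;x₃) = Im((x₃ + i)⁴ (x₁ - i x₂))`. -/
def Pex : Polynomial (MvPolynomial (Fin 2) ℝ) :=
  C (-(MvPolynomial.X 1)) * X^4 + C (4*MvPolynomial.X 0) * X^3 + C (6*MvPolynomial.X 1) * X^2
    + C (-(4*MvPolynomial.X 0)) * X + C (-(MvPolynomial.X 1))

/-- Its specialization at `(a,b)`. -/
def Puni (a b : ℝ) : Polynomial ℝ :=
  C (-b) * X^4 + C (4*a) * X^3 + C (6*b) * X^2 + C (-(4*a)) * X + C (-b)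

lemma evalP_Pex (x : Fin 2 → ℝ) : evalP Pex x = Puni (x 0) (x 1) := by
  simp only [evalP, Pex, Puni, Polynomial.map_add, Polynomial.map_mul, Polynomial.map_pow,
    Polynomial.map_neg, Polynomial.map_ofNat, map_C, map_X, map_neg, map_mul, map_ofNat,
    MvPolynomial.eval_X]

lemma natDegree_Pex : Pex.natDegree = 4 := by
  unfold Pex
  compute_degree!

lemma Puni_ne_zero {x : Fin 2 → ℝ} (hx : x ≠ 0) : Puni (x 0) (x 1) ≠ 0 := by
  intro h
  apply hx
  have h4 := congrArg (fun p => coeff p 4) h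
  have h3 := congrArg (fun p => coeff p 3) h
  simp only [Puni, coeff_add, coeff_C_mul, coeff_X_pow, coeff_X, coeff_C, coeff_zero] at h4 h3
  norm_num at h4 h3
  funext i
  fin_cases i
  · simpa using h3
  · simpa using h4

lemma eval_homog_Puni (a b : ℝ) (w : Fin 2 → ℝ) :
    MvPolynomial.eval w (homog 4 (Puni a b))
      = -b*(w 0)^4 + 4*a*(w 0)^3*(w 1) + 6*b*(w 0)^2*(w 1)^2 - 4*a*(w 0)*(w 1)^3 - b*(w 1)^4 := by
  have c0 : (Puni a b).coeff 0 = -b := by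
    simp only [Puni, coeff_add, coeff_C_mul, coeff_X_pow, coeff_X, coeff_C]; norm_num
  have c1 : (Puni a b).coeff 1 = -(4*a) := by
    simp only [Puni, coeff_add, coeff_C_mul, coeff_X_pow, coeff_X, coeff_C]; norm_num
  have c2 : (Puni a b).coeff 2 = 6*b := by
    simp only [Puni, coeff_add, coeff_C_mul, coeff_X_pow, coeff_X, coeff_C]; norm_num
  have c3 : (Puni a b).coeff 3 = 4*a := by
    simp only [Puni, coeff_add, coeff_C_mul, coeff_X_pow, coeff_X, coeff_C]; norm_num
  have c4 : (Puni a b).coeff 4 = -b := by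
    simp only [Puni, coeff_add, coeff_C_mul, coeff_X_pow, coeff_X, coeff_C]; norm_num
  simp only [homog, Finset.sum_range_succ, Finset.sum_range_zero, c0, c1, c2, c3, c4,
    map_add, map_mul, map_pow, map_neg, MvPolynomial.eval_C, MvPolynomial.eval_X, zero_add]
  ring

/-! #### The discriminant computation -/

theorem cons_val_five' {α : Type*} {m : ℕ} (x : α) (u : Fin (m + 5) → α) :
    Matrix.vecCons x u 5
      = Matrix.vecHead (Matrix.vecTail (Matrix.vecTail (Matrix.vecTail (Matrix.vecTail u)))) :=
  rfl

set_option maxHeartbeats 1000000 in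
lemma sylvester_Puni (a b : ℝ) :
    sylvester 3 3 (C (-(4*b)) * X^3 + C (12*a) * X^2 + C (12*b) * X + C (-(4*a)) : ℝ[X])
      (C (4*a) * X^3 + C (12*b) * X^2 + C (-(12*a)) * X + C (-(4*b)))
    = !![-(4*b), 12*a, 12*b, -(4*a), 0, 0;
         0, -(4*b), 12*a, 12*b, -(4*a), 0;
         0, 0, -(4*b), 12*a, 12*b, -(4*a);
         4*a, 12*b, -(12*a), -(4*b), 0, 0;
         0, 4*a, 12*b, -(12*a), -(4*b), 0;
         0, 0, 4*a, 12*b, -(12*a), -(4*b)] := by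
  ext i j
  fin_cases i <;> fin_cases j <;>
    simp only [_root_.sylvester, coeff_add, coeff_C_mul, coeff_X_pow, coeff_X, coeff_C,
      Matrix.cons_val', Matrix.cons_val_zero, Matrix.cons_val_one, Matrix.cons_val_two,
      Matrix.cons_val_three, Matrix.cons_val_four, cons_val_five', Matrix.head_cons,
      Matrix.head_fin_const, Matrix.vecTail, Matrix.vecHead, Matrix.of_apply,
      Function.comp_apply, Fin.isValue] <;>
    norm_num

set_option maxHeartbeats 2000000 in
set_option maxRecDepth 10000 in
lemma det_sylvester_Puni (a b : ℝ) :
    (!![-(4*b), 12*a, 12*b, -(4*a), 0, 0;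
         0, -(4*b), 12*a, 12*b, -(4*a), 0;
         0, 0, -(4*b), 12*a, 12*b, -(4*a);
         4*a, 12*b, -(12*a), -(4*b), 0, 0;
         0, 4*a, 12*b, -(12*a), -(4*b), 0;
         0, 0, 4*a, 12*b, -(12*a), -(4*b)] : Matrix (Fin 6) (Fin 6) ℝ).det
    = 262144*(a^2+b^2)^3 := by
  simp only [Matrix.det_succ_row_zero, Fin.sum_univ_succ, Matrix.det_fin_one,
    Matrix.det_fin_zero, Fin.zero_succAbove, Fin.succ_succAbove_zero, Fin.succ_succAbove_succ,
    Matrix.cons_val_zero, Matrix.cons_val_succ, Matrix.submatrix_apply,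
    Matrix.of_apply, Matrix.submatrix_submatrix, Function.comp_apply, Matrix.cons_val',
    Matrix.head_cons, Matrix.head_fin_const, Matrix.cons_val_fin_one, Finset.univ_unique,
    Finset.sum_singleton, Fin.default_eq_zero, Fin.val_succ, Fin.val_zero, pow_succ, pow_zero,
    zero_mul, mul_zero, add_zero, zero_add, neg_zero, one_mul, mul_one, mul_neg, neg_mul,
    neg_neg]
  ring

lemma derivative_Puni (a b : ℝ) :
    derivative (Puni a b)
      = C (-(4*b)) * X^3 + C (12*a) * X^2 + C (12*b) * X + C (-(4*a)) := by
  simp only [Puni, derivative_add, derivative_mul, derivative_C, derivative_X_pow,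
    derivative_X, derivative_ofNat, map_neg, map_mul, map_ofNat, map_natCast, Nat.cast_ofNat]
  ring

lemma combo_Puni (a b : ℝ) :
    C ((4:ℕ) : ℝ) * Puni a b - X * derivative (Puni a b)
      = C (4*a) * X^3 + C (12*b) * X^2 + C (-(12*a)) * X + C (-(4*b)) := by
  rw [derivative_Puni]
  simp only [Puni, map_neg, map_mul, map_ofNat, map_natCast, Nat.cast_ofNat]
  ring

set_option maxRecDepth 8000 in
lemma disc_compute (a b : ℝ) : discFixed 4 (Puni a b) = 262144*(a^2+b^2)^3 := by
  have main : resFixed 3 3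
        (C (-(4*b)) * X^3 + C (12*a) * X^2 + C (12*b) * X + C (-(4*a)) : ℝ[X])
        (C (4*a) * X^3 + C (12*b) * X^2 + C (-(12*a)) * X + C (-(4*b)))
      = 262144*(a^2+b^2)^3 := by
    unfold resFixed
    rw [sylvester_Puni, det_sylvester_Puni]
  unfold discFixed
  rw [combo_Puni, derivative_Puni,
    show ((-1:ℝ))^(4*(4-1)/2) = 1 from by norm_num, one_mul,
    show (resFixed (4-1) (4-1) : Polynomial ℝ → Polynomial ℝ → ℝ) = resFixed 3 3 from rfl]
  exact main

lemma sylvester_map' {R S : Type*} [CommRing R] [CommRing S] (φ : R →+* S) (p q : ℕ)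
    (P Q : Polynomial R) :
    (sylvester p q P Q).map φ = sylvester p q (P.map φ) (Q.map φ) := by
  ext i j
  simp only [_root_.sylvester, Matrix.map_apply, Polynomial.coeff_map, apply_ite φ, map_zero]

lemma discFixed_map {R S : Type*} [CommRing R] [CommRing S] (φ : R →+* S) (p : ℕ)
    (P : Polynomial R) :
    φ (discFixed p P) = discFixed p (P.map φ) := by
  unfold discFixed resFixed
  rw [map_mul, map_pow, map_neg, map_one, RingHom.map_det, RingHom.mapMatrix_apply,
    sylvester_map', Polynomial.derivative_map, Polynomial.map_sub, Polynomial.map_mul,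
    Polynomial.map_mul, Polynomial.map_C, Polynomial.map_X, map_natCast]

lemma eval_disc (x : Fin 2 → ℝ) :
    MvPolynomial.eval x (discFixed 4 Pex) = 262144*((x 0)^2+(x 1)^2)^3 := by
  have h := discFixed_map (MvPolynomial.eval x : MvPolynomial (Fin 2) ℝ →+* ℝ) 4 Pex
  have h2 : Pex.map (MvPolynomial.eval x : MvPolynomial (Fin 2) ℝ →+* ℝ) = evalP Pex x := rfl
  rw [h, h2, evalP_Pex, disc_compute]

/-! #### Order at a point -/

lemma ordAt_eq_zero {E : Type*} [NormedAddCommGroup E] [NormedSpace ℝ E]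
    {f : E → ℝ} {v : E} (h : f v ≠ 0) : ordAt f v = 0 := by
  refine le_antisymm ?_ (zero_le)
  apply sInf_le
  refine ⟨0, rfl, fun h0 => h ?_⟩
  have := congrFun (congrArg DFunLike.coe h0) ![]
  simpa [iteratedFDeriv_zero_apply] using this

/-! #### Topology of the real projective line -/

lemma sq_add_sq_pos' {v : Fin 2 → ℝ} (hv : v ≠ 0) : 0 < (v 0)^2 + (v 1)^2 := by
  rcases eq_or_ne (v 0) 0 with h0 | h0
  · have h1 : v 1 ≠ 0 := by
      intro h1; apply hv; funext i; fin_cases i <;> simp [h0, h1]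
    positivity
  · positivity

/-- A scale-invariant separating function on `ℝP¹`. -/
def sep (w : Fin 2 → ℝ) : RP1 → ℝ :=
  Projectivization.lift
    (fun u => ((u : Fin 2 → ℝ) 0 * w 1 - (u : Fin 2 → ℝ) 1 * w 0)^2
      / (((u : Fin 2 → ℝ) 0)^2 + ((u : Fin 2 → ℝ) 1)^2))
    (by
      rintro ⟨u, hu⟩ ⟨v, hv⟩ t (h : u = t • v)
      have hp := sq_add_sq_pos' hv
      have ht : t ≠ 0 := by
        rintro rfl; apply hu; rw [h, zero_smul]
      have ht2 : (0:ℝ) < t^2 := by positivity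
      simp only [h, Pi.smul_apply, smul_eq_mul]
      rw [div_eq_div_iff (by nlinarith) (by positivity)]
      ring)

lemma sep_mk (w : Fin 2 → ℝ) (v : Fin 2 → ℝ) (hv : v ≠ 0) :
    sep w (Projectivization.mk ℝ v hv) = (v 0 * w 1 - v 1 * w 0)^2 / ((v 0)^2 + (v 1)^2) := rfl

lemma continuous_sep (w : Fin 2 → ℝ) : Continuous (sep w) := by
  apply continuous_quot_lift
  have hc : Continuous (fun u : {v : Fin 2 → ℝ // v ≠ 0} => (u : Fin 2 → ℝ)) :=
    continuous_subtype_val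
  have h0 : Continuous (fun u : {v : Fin 2 → ℝ // v ≠ 0} => (u : Fin 2 → ℝ) 0) :=
    (continuous_apply 0).comp hc
  have h1 : Continuous (fun u : {v : Fin 2 → ℝ // v ≠ 0} => (u : Fin 2 → ℝ) 1) :=
    (continuous_apply 1).comp hc
  exact Continuous.div (((h0.mul continuous_const).sub (h1.mul continuous_const)).pow 2)
    ((h0.pow 2).add (h1.pow 2)) (fun u => ne_of_gt (sq_add_sq_pos' u.2))

lemma mk_eq_of_cross {v w : Fin 2 → ℝ} (hv : v ≠ 0) (hw : w ≠ 0)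
    (h : v 0 * w 1 - v 1 * w 0 = 0) :
    Projectivization.mk ℝ v hv = Projectivization.mk ℝ w hw := by
  rw [Projectivization.mk_eq_mk_iff']
  rcases eq_or_ne (w 0) 0 with h0 | h0
  · have hw1 : w 1 ≠ 0 := by
      intro h1; apply hw; funext i; fin_cases i <;> simp [h0, h1]
    refine ⟨v 1 / w 1, ?_⟩
    funext i
    fin_cases i
    · show v 1 / w 1 * w 0 = v 0
      have h2 : v 0 * w 1 = 0 := by rw [h0] at h; linarith [h]
      have hv0 : v 0 = 0 := by
        rcases mul_eq_zero.mp h2 with h' | h'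
        · exact h'
        · exact absurd h' hw1
      rw [h0, hv0]; ring
    · show v 1 / w 1 * w 1 = v 1
      field_simp
  · refine ⟨v 0 / w 0, ?_⟩
    funext i
    fin_cases i
    · show v 0 / w 0 * w 0 = v 0
      field_simp
    · show v 0 / w 0 * w 1 = v 1
      field_simp
      nlinarith [h]

instance : T2Space RP1 := by
  constructor
  intro x y
  induction x using Projectivization.ind with | h v hv => ?_
  induction y using Projectivization.ind with | h w hw => ?_
  intro hxy
  apply separated_by_continuous (continuous_sep w)
  rw [sep_mk, sep_mk, show w 0 * w 1 - w 1 * w 0 = 0 from by ring]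
  have hcross : v 0 * w 1 - v 1 * w 0 ≠ 0 := fun h => hxy (mk_eq_of_cross hv hw h)
  have hp := sq_add_sq_pos' hv
  have hnum : (0:ℝ) < (v 0 * w 1 - v 1 * w 0)^2 :=
    lt_of_le_of_ne (sq_nonneg _) (Ne.symm (pow_ne_zero 2 hcross))
  have hz : (0:ℝ)^2 / ((w 0)^2 + (w 1)^2) = 0 := by simp
  rw [hz]
  exact ne_of_gt (div_pos hnum hp)

lemma continuous_mk_comp {f : ℝ → Fin 2 → ℝ} (hf : Continuous f) (h : ∀ s, f s ≠ 0) :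
    Continuous (fun s => Projectivization.mk ℝ (f s) (h s)) := by
  have e : (fun s => Projectivization.mk ℝ (f s) (h s))
      = (fun u : {v : Fin 2 → ℝ // v ≠ 0} => (Quotient.mk'' u : RP1))
        ∘ (fun s => (⟨f s, h s⟩ : {v : Fin 2 → ℝ // v ≠ 0})) := rfl
  rw [e]
  exact Continuous.comp (continuous_quotient_mk') (Continuous.subtype_mk hf _)

/-! #### Trigonometric identities -/

lemma cos_quad (s : ℝ) :
    Real.cos s = (Real.cos (s/4))^4 - 6*(Real.cos (s/4))^2*(Real.sin (s/4))^2
      + (Real.sin (s/4))^4 := by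
  set u := s/4 with hu
  have h4 : s = 2*(2*u) := by rw [hu]; ring
  rw [h4, Real.cos_two_mul, Real.cos_two_mul]
  linear_combination (-(Real.sin u^2 - 7*Real.cos u^2 + 1)) * (Real.sin_sq_add_cos_sq u)

lemma sin_quad (s : ℝ) :
    Real.sin s = 4*(Real.cos (s/4))^3*(Real.sin (s/4))
      - 4*(Real.cos (s/4))*(Real.sin (s/4))^3 := by
  set u := s/4 with hu
  have h4 : s = 2*(2*u) := by rw [hu]; ring
  rw [h4, Real.sin_two_mul, Real.sin_two_mul, Real.cos_two_mul]
  linear_combination (4 * Real.sin u * Real.cos u) * (Real.sin_sq_add_cos_sq u)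

lemma unit_ne_zero (s : ℝ) : (![Real.cos s, Real.sin s] : Fin 2 → ℝ) ≠ 0 := by
  intro h
  have h0 := congrFun h 0
  have h1 := congrFun h 1
  simp only [Matrix.cons_val_zero, Matrix.cons_val_one, Matrix.head_cons, Pi.zero_apply] at h0 h1
  nlinarith [Real.sin_sq_add_cos_sq s]

end AuxProof

/-- There exist a connected analytic submanifold `S` of `ℝ²` and a
polynomial `P` in `x₁,x₂;x₃` of degree `4` in `x₃` such that: `P` never nullifies on `S`;
`Disc^4_{x₃}(P)` is not the zero polynomial and is order-invariant on `S`; and `P` is not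
projectively delineable over `S`. -/
theorem exists_counterexample_global_projective_delineability :
    ∃ (S : Set (Fin 2 → ℝ)) (P : Polynomial (MvPolynomial (Fin 2) ℝ)),
      IsAnalyticSubmanifold S ∧ IsConnected S ∧
      P.natDegree = 4 ∧
      (∀ x ∈ S, evalP P x ≠ 0) ∧
      discFixed 4 P ≠ 0 ∧
      OrderInvariantOn (fun x => MvPolynomial.eval x (discFixed 4 P)) S ∧
      ¬ ProjDelineable 4 P S := by
  classical
  refine ⟨{x : Fin 2 → ℝ | x ≠ 0}, Pex, ?_, ?_, natDegree_Pex, ?_, ?_, ?_, ?_⟩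
  · -- analytic submanifold
    intro s hs
    refine ⟨{x : Fin 2 → ℝ | x ≠ 0}, {x : Fin 2 → ℝ | x ≠ 0}, id, id, ⊤,
      isOpen_ne, isOpen_ne, hs, analyticOnNhd_id, analyticOnNhd_id,
      fun x h => h, fun x h => h, fun x _ => rfl, fun x _ => rfl, ?_⟩
    simp [Set.image_id, Set.inter_univ]
  · -- connected
    rw [show {x : Fin 2 → ℝ | x ≠ 0} = ({0} : Set (Fin 2 → ℝ))ᶜ from
      (Set.compl_singleton_eq (0 : Fin 2 → ℝ)).symm]
    exact isConnected_compl_singleton_of_one_lt_rank (by simp) 0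
  · -- never nullifies
    intro x hx
    rw [evalP_Pex]
    exact Puni_ne_zero hx
  · -- discriminant nonzero
    intro h
    have h1 := eval_disc ![1, 0]
    rw [h] at h1
    simp only [Matrix.cons_val_zero, Matrix.cons_val_one, Matrix.head_cons, map_zero] at h1
    norm_num at h1
  · -- order-invariance
    intro x hx y hy
    have hx' : x ≠ 0 := hx
    have hy' : y ≠ 0 := hy
    rw [ordAt_eq_zero, ordAt_eq_zero]
    · rw [eval_disc]
      have := sq_add_sq_pos' hy'
      exact mul_ne_zero (by norm_num) (ne_of_gt (pow_pos this 3))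
    · rw [eval_disc]
      have := sq_add_sq_pos' hx'
      exact mul_ne_zero (by norm_num) (ne_of_gt (pow_pos this 3))
  · -- not projectively delineable
    rintro ⟨k, θ, hcont, hdisj, hroot, -⟩
    set S : Set (Fin 2 → ℝ) := {x : Fin 2 → ℝ | x ≠ 0} with hS
    set γ : ℝ → (Fin 2 → ℝ) := fun s => ![Real.cos s, Real.sin s] with hγ
    set v : ℝ → (Fin 2 → ℝ) := fun s => ![Real.cos (s/4), Real.sin (s/4)] with hv
    have hγne : ∀ s, γ s ≠ 0 := fun s => unit_ne_zero s
    have hvne : ∀ s, v s ≠ 0 := fun s => unit_ne_zero (s/4)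
    have hγS : ∀ s, γ s ∈ S := fun s => hγne s
    have hγcont : Continuous γ := by
      apply continuous_pi
      intro i
      fin_cases i
      · simpa [hγ] using Real.continuous_cos
      · simpa [hγ] using Real.continuous_sin
    have hvcont : Continuous v := by
      apply continuous_pi
      intro i
      fin_cases i
      · simpa [hv, Function.comp_def] using Real.continuous_cos.comp (continuous_id.div_const 4)
      · simpa [hv, Function.comp_def] using Real.continuous_sin.comp (continuous_id.div_const 4)
    have hrootfact : ∀ s, MvPolynomial.eval (v s) (homog 4 (evalP Pex (γ s))) = 0 := by
      intro s
      rw [evalP_Pex, eval_homog_Puni]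
      simp only [hγ, hv, Matrix.cons_val_zero, Matrix.cons_val_one, Matrix.head_cons]
      rw [cos_quad s, sin_quad s]
      ring
    set A : Fin k → Set ℝ :=
      fun l => {s | θ l (γ s) = Projectivization.mk ℝ (v s) (hvne s)} with hA
    have hcover : ∀ s, ∃ l, s ∈ A l := fun s =>
      (hroot (γ s) (hγS s) (v s) (hvne s)).mp (hrootfact s)
    have hdisj' : ∀ (s : ℝ) (l l' : Fin k), l ≠ l' → s ∈ A l → s ∈ A l' → False :=
      fun s l l' hne h1 h2 => hdisj (γ s) (hγS s) l l' hne (h1.trans h2.symm)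
    have hclosed : ∀ l, IsClosed (A l) := fun l =>
      isClosed_eq ((hcont l).comp_continuous hγcont hγS) (continuous_mk_comp hvcont hvne)
    have hopen : ∀ l, IsOpen (A l) := by
      intro l
      have he : A l = (⋃ l' ∈ {l' : Fin k | l' ≠ l}, A l')ᶜ := by
        ext s
        simp only [Set.mem_compl_iff, Set.mem_iUnion, Set.mem_setOf_eq, exists_prop,
          not_exists, not_and]
        constructor
        · intro h l' hl' hsl'
          exact hdisj' s l' l hl' hsl' h
        · intro h
          obtain ⟨l0, hl0⟩ := hcover s
          rcases eq_or_ne l0 l with rfl | hne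
          · exact hl0
          · exact absurd hl0 (h l0 hne)
      rw [he]
      exact ((Set.toFinite {l' : Fin k | l' ≠ l}).isClosed_biUnion
        (fun l' _ => hclosed l')).isOpen_compl
    obtain ⟨l0, hl0⟩ := hcover 0
    have huniv : A l0 = Set.univ := by
      rcases isClopen_iff.mp ⟨hclosed l0, hopen l0⟩ with h | h
      · rw [h] at hl0
        exact absurd hl0 (Set.notMem_empty 0)
      · exact h
    have h2pi : (2*Real.pi) ∈ A l0 := huniv ▸ Set.mem_univ _
    have hγeq : γ (2*Real.pi) = γ 0 := by
      funext i
      fin_cases i <;>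
        simp [hγ, Real.cos_two_pi, Real.sin_two_pi, Real.cos_zero, Real.sin_zero]
    have h0' : θ l0 (γ 0) = Projectivization.mk ℝ (v 0) (hvne 0) := hl0
    have h2' : θ l0 (γ 0) = Projectivization.mk ℝ (v (2*Real.pi)) (hvne (2*Real.pi)) := by
      rw [← hγeq]; exact h2pi
    have h01 : Projectivization.mk ℝ (v 0) (hvne 0)
        = Projectivization.mk ℝ (v (2*Real.pi)) (hvne (2*Real.pi)) := h0'.symm.trans h2'
    rw [Projectivization.mk_eq_mk_iff'] at h01
    obtain ⟨t, ht⟩ := h01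
    have h2 := congrFun ht 0
    simp only [hv, Pi.smul_apply, smul_eq_mul, Matrix.cons_val_zero] at h2
    rw [show (2*Real.pi)/4 = Real.pi/2 from by ring, Real.cos_pi_div_two,
      show (0:ℝ)/4 = 0 from by ring, Real.cos_zero] at h2
    norm_num at h2
end
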